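/- arXiv:2504.00813 — 3 statements merged into one kernel-verified Lean document; each statement's English description precedes it below -/
import Mathlib

section
/- Proposition 1 (Safety / forward invariance). Suppose that (∂h_i/∂u)(x,u) = 0 for all (x,u) ∈ ℝ^n × ℝ^m and all i < r (relative degree r). Let α, γ > 0 and let ξ : [0,∞) → ℝ^n and υ : [0,∞) → ℝ^m be differentiable functions such that for all t ≥ 0: ξ'(t) = f(ξ(t),υ(t)), ⟨∇b(υ(t)), υ'(t)⟩ + α·b(υ(t)) ≥ 0, and (∂h_r/∂x)(ξ(t),υ(t))·f(ξ(t),υ(t)) + (∂h_r/∂u)(ξ(t),υ(t))·υ'(t) + γ·h_r(ξ(t),υ(t)) ≥ 0. If (ξ(0),υ(0)) ∈ ⋂_{i=0}^{r} X_i, then (ξ(t),υ(t)) ∈ ⋂_{i=0}^{r} X_i for all t ≥ 0. -/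
open Set Filter Topology
open scoped RealInnerProductSpace

noncomputable def hseq {n m : ℕ}
    (f : EuclideanSpace ℝ (Fin n) × EuclideanSpace ℝ (Fin m) → EuclideanSpace ℝ (Fin n))
    (h : EuclideanSpace ℝ (Fin n) → ℝ) (β : ℝ) :
    ℕ → EuclideanSpace ℝ (Fin n) × EuclideanSpace ℝ (Fin m) → ℝ
  | 0 => fun p => h p.1
  | i + 1 => fun p =>
      fderiv ℝ (fun x => hseq f h β i (x, p.2)) p.1 (f p) + β * hseq f h β i p

noncomputable def Xset {n m : ℕ}
    (f : EuclideanSpace ℝ (Fin n) × EuclideanSpace ℝ (Fin m) → EuclideanSpace ℝ (Fin n))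
    (h : EuclideanSpace ℝ (Fin n) → ℝ) (b : EuclideanSpace ℝ (Fin m) → ℝ) (β : ℝ) (i : ℕ) :
    Set (EuclideanSpace ℝ (Fin n) × EuclideanSpace ℝ (Fin m)) :=
  {p | 0 ≤ h p.1 ∧ 0 ≤ b p.2 ∧ 0 ≤ hseq f h β i p}



/-- One-sided Grönwall: if `F' ≥ -c F` on `Ici 0` and `F 0 ≥ 0`, then `F ≥ 0` on `Ici 0`. -/
lemma nonneg_of_deriv_ge_neg_mul {F F' : ℝ → ℝ} {c : ℝ}
    (hF : ∀ t ∈ Ici (0:ℝ), HasDerivWithinAt F (F' t) (Ici 0) t)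
    (hineq : ∀ t ∈ Ici (0:ℝ), -(c * F t) ≤ F' t)
    (h0 : 0 ≤ F 0) : ∀ t ∈ Ici (0:ℝ), 0 ≤ F t := by
  set G : ℝ → ℝ := fun t => Real.exp (c * t) * F t with hG
  have hGd : ∀ t ∈ Ici (0:ℝ),
      HasDerivWithinAt G (c * Real.exp (c * t) * F t + Real.exp (c * t) * F' t) (Ici 0) t := by
    intro t ht
    have h1 : HasDerivWithinAt (fun t => Real.exp (c * t)) (c * Real.exp (c * t)) (Ici 0) t := by
      simpa [mul_comm] using (((hasDerivAt_id t).const_mul c).exp).hasDerivWithinAt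
    exact h1.mul (hF t ht)
  have hmono : MonotoneOn G (Ici (0:ℝ)) := by
    apply monotoneOn_of_hasDerivWithinAt_nonneg (convex_Ici 0)
      (fun t ht => (hGd t ht).continuousWithinAt)
      (f' := fun t => c * Real.exp (c * t) * F t + Real.exp (c * t) * F' t)
    · intro t ht
      rw [interior_Ici] at *
      exact (hGd t (mem_Ici.mpr (le_of_lt ht))).mono Ioi_subset_Ici_self
    · intro t ht
      rw [interior_Ici] at ht
      have := hineq t (mem_Ici.mpr (le_of_lt ht))
      nlinarith [Real.exp_pos (c * t)]
  intro t ht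
  have : G 0 ≤ G t := hmono (self_mem_Ici) ht ht
  have hG0 : 0 ≤ G 0 := by simp [hG]; positivity
  have hGt : 0 ≤ G t := le_trans hG0 this
  simp only [hG] at hGt
  have := Real.exp_pos (c * t)
  nlinarith

section partials
variable {E F : Type*} [NormedAddCommGroup E] [NormedSpace ℝ E]
  [NormedAddCommGroup F] [NormedSpace ℝ F]
  {H : E × F → ℝ} {p : E × F}

lemma hasFDerivAt_partial_fst (hH : DifferentiableAt ℝ H p) :
    HasFDerivAt (fun x => H (x, p.2)) ((fderiv ℝ H p).comp (ContinuousLinearMap.inl ℝ E F)) p.1 :=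
  hH.hasFDerivAt.comp p.1 (hasFDerivAt_prodMk_left p.1 p.2)

lemma hasFDerivAt_partial_snd (hH : DifferentiableAt ℝ H p) :
    HasFDerivAt (fun u => H (p.1, u)) ((fderiv ℝ H p).comp (ContinuousLinearMap.inr ℝ E F)) p.2 :=
  hH.hasFDerivAt.comp p.2 (hasFDerivAt_prodMk_right p.1 p.2)

lemma fderiv_split (hH : DifferentiableAt ℝ H p) (v : E) (w : F) :
    fderiv ℝ H p (v, w)
      = fderiv ℝ (fun x => H (x, p.2)) p.1 v + fderiv ℝ (fun u => H (p.1, u)) p.2 w := by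
  rw [(hasFDerivAt_partial_fst hH).fderiv, (hasFDerivAt_partial_snd hH).fderiv]
  have hvw : (v, w) = ((v, 0) : E × F) + (0, w) := by simp
  rw [hvw, map_add]
  simp

end partials

lemma hseq_contDiff {n m r : ℕ}
    (f : EuclideanSpace ℝ (Fin n) × EuclideanSpace ℝ (Fin m) → EuclideanSpace ℝ (Fin n))
    (h : EuclideanSpace ℝ (Fin n) → ℝ) (β : ℝ)
    (hf : ContDiff ℝ (r + 1 : ℕ) f) (hh : ContDiff ℝ (r + 2 : ℕ) h) :
    ∀ i k : ℕ, i + k ≤ r + 2 → ContDiff ℝ (k : ℕ) (hseq f h β i) := by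
  intro i
  induction i with
  | zero =>
    intro k hk
    exact (hh.of_le (by exact_mod_cast (by omega : k ≤ r + 2))).comp contDiff_fst
  | succ i ih =>
    intro k hk
    have IH : ContDiff ℝ ((k + 1 : ℕ)) (hseq f h β i) := ih (k + 1) (by omega)
    show ContDiff ℝ (k : ℕ) fun p =>
      fderiv ℝ (fun x => hseq f h β i (x, p.2)) p.1 (f p) + β * hseq f h β i p
    have h1 : ContDiff ℝ (k : ℕ) fun p : EuclideanSpace ℝ (Fin n) × EuclideanSpace ℝ (Fin m) =>
        fderiv ℝ (fun x => hseq f h β i (x, p.2)) p.1 := by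
      have huncurry : ContDiff ℝ ((k + 1 : ℕ)) (Function.uncurry
          (fun (p : EuclideanSpace ℝ (Fin n) × EuclideanSpace ℝ (Fin m)) x =>
            hseq f h β i (x, p.2))) :=
        IH.comp (ContDiff.prodMk (contDiff_snd) (contDiff_snd.comp contDiff_fst))
      exact ContDiff.fderiv huncurry contDiff_fst (by norm_cast)
    have h2 : ContDiff ℝ (k : ℕ) f := hf.of_le (by exact_mod_cast by omega)
    exact (h1.clm_apply h2).add (contDiff_const.mul (IH.of_le (by exact_mod_cast by omega)))

/-- Proposition 1 (Safety / forward invariance). Under the relative-degree assumption, any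
solution of the plant whose control input satisfies the two CBF inequalities, starting in
`⋂_{i=0}^r X_i`, stays in `⋂_{i=0}^r X_i` for all `t ≥ 0`. -/
theorem safety
    {n m r : ℕ} (hn : 0 < n) (hm : 0 < m) (hr : 0 < r)
    (f : EuclideanSpace ℝ (Fin n) × EuclideanSpace ℝ (Fin m) → EuclideanSpace ℝ (Fin n))
    (h : EuclideanSpace ℝ (Fin n) → ℝ) (b : EuclideanSpace ℝ (Fin m) → ℝ)
    (hf : ContDiff ℝ (r + 1 : ℕ) f) (hh : ContDiff ℝ (r + 2 : ℕ) h) (hb : ContDiff ℝ 2 b)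
    (β : ℝ) (hβ : 0 < β)
    (hrel : ∀ (p : EuclideanSpace ℝ (Fin n) × EuclideanSpace ℝ (Fin m)), ∀ i < r,
      fderiv ℝ (fun u => hseq f h β i (p.1, u)) p.2 = 0)
    (α γ : ℝ) (hα : 0 < α) (hγ : 0 < γ)
    (ξ : ℝ → EuclideanSpace ℝ (Fin n)) (υ : ℝ → EuclideanSpace ℝ (Fin m))
    (hode : ∀ t ∈ Ici (0 : ℝ), ∃ v : EuclideanSpace ℝ (Fin m),
      HasDerivWithinAt ξ (f (ξ t, υ t)) (Ici 0) t ∧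
      HasDerivWithinAt υ v (Ici 0) t ∧
      0 ≤ ⟪gradient b (υ t), v⟫ + α * b (υ t) ∧
      0 ≤ fderiv ℝ (fun x => hseq f h β r (x, υ t)) (ξ t) (f (ξ t, υ t))
        + fderiv ℝ (fun u => hseq f h β r (ξ t, u)) (υ t) v + γ * hseq f h β r (ξ t, υ t))
    (h0 : (ξ 0, υ 0) ∈ ⋂ i ∈ Finset.range (r + 1), Xset f h b β i) :
    ∀ t ∈ Ici (0 : ℝ), (ξ t, υ t) ∈ ⋂ i ∈ Finset.range (r + 1), Xset f h b β i := by
  classical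
  choose! v hξd hυd hbineq hrineq using hode
  simp only [Set.mem_iInter, Finset.mem_range, Xset, Set.mem_setOf_eq] at h0
  -- initial conditions
  have h00 : 0 ≤ hseq f h β 0 (ξ 0, υ 0) := by
    simpa [hseq] using (h0 0 (by omega)).1
  have hb0 : 0 ≤ b (υ 0) := (h0 0 (by omega)).2.1
  have hi0 : ∀ i ≤ r, 0 ≤ hseq f h β i (ξ 0, υ 0) := fun i hi => (h0 i (by omega)).2.2
  -- differentiability of hseq i for i ≤ r
  have hdiff : ∀ i ≤ r, Differentiable ℝ (hseq f h β i) := by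
    intro i hi
    exact (hseq_contDiff f h β hf hh i 1 (by omega)).differentiable (by simp)
  -- chain rule along the trajectory
  have htraj : ∀ i ≤ r, ∀ t ∈ Ici (0:ℝ),
      HasDerivWithinAt (fun t => hseq f h β i (ξ t, υ t))
        (fderiv ℝ (fun x => hseq f h β i (x, υ t)) (ξ t) (f (ξ t, υ t))
          + fderiv ℝ (fun u => hseq f h β i (ξ t, u)) (υ t) (v t)) (Ici 0) t := by
    intro i hi t ht
    have hp : HasDerivWithinAt (fun t => (ξ t, υ t)) (f (ξ t, υ t), v t) (Ici 0) t :=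
      (hξd t ht).prodMk (hυd t ht)
    have hd : DifferentiableAt ℝ (hseq f h β i) (ξ t, υ t) := hdiff i hi (ξ t, υ t)
    have H := hd.hasFDerivAt.comp_hasDerivWithinAt t hp
    have e := fderiv_split (p := (ξ t, υ t)) hd (f (ξ t, υ t)) (v t)
    rw [e] at H
    exact H
  -- key recursion for i < r
  have hkey : ∀ i < r, ∀ t ∈ Ici (0:ℝ),
      HasDerivWithinAt (fun t => hseq f h β i (ξ t, υ t))
        (hseq f h β (i+1) (ξ t, υ t) - β * hseq f h β i (ξ t, υ t)) (Ici 0) t := by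
    intro i hi t ht
    have H := htraj i (le_of_lt hi) t ht
    have hz : fderiv ℝ (fun u => hseq f h β i (ξ t, u)) (υ t) = 0 := by
      simpa using hrel (ξ t, υ t) i hi
    rw [hz] at H
    have e : hseq f h β (i+1) (ξ t, υ t)
        = fderiv ℝ (fun x => hseq f h β i (x, υ t)) (ξ t) (f (ξ t, υ t))
          + β * hseq f h β i (ξ t, υ t) := rfl
    have e2 : hseq f h β (i+1) (ξ t, υ t) - β * hseq f h β i (ξ t, υ t)
        = fderiv ℝ (fun x => hseq f h β i (x, υ t)) (ξ t) (f (ξ t, υ t))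
          + (0 : EuclideanSpace ℝ (Fin m) →L[ℝ] ℝ) (v t) := by
      simp [e]
    rw [e2]
    exact H
  -- b stays nonnegative
  have hbnn : ∀ t ∈ Ici (0:ℝ), 0 ≤ b (υ t) := by
    apply nonneg_of_deriv_ge_neg_mul (c := α)
      (F' := fun t => ⟪gradient b (υ t), v t⟫) _ _ hb0
    · intro t ht
      have hbd : DifferentiableAt ℝ b (υ t) :=
        (hb.differentiable (by simp)) (υ t)
      have H := hbd.hasFDerivAt.comp_hasDerivWithinAt t (hυd t ht)
      have e : ⟪gradient b (υ t), v t⟫ = fderiv ℝ b (υ t) (v t) := by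
        simp [gradient, InnerProductSpace.toDual_symm_apply]
      show HasDerivWithinAt (fun s => b (υ s)) (⟪gradient b (υ t), v t⟫) (Ici 0) t
      rw [e]
      exact H
    · intro t ht
      have := hbineq t ht
      linarith
  -- h_r stays nonnegative
  have hrnn : ∀ t ∈ Ici (0:ℝ), 0 ≤ hseq f h β r (ξ t, υ t) := by
    apply nonneg_of_deriv_ge_neg_mul (c := γ)
      (F' := fun t => fderiv ℝ (fun x => hseq f h β r (x, υ t)) (ξ t) (f (ξ t, υ t))
        + fderiv ℝ (fun u => hseq f h β r (ξ t, u)) (υ t) (v t)) _ _ (hi0 r le_rfl)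
    · intro t ht
      exact htraj r le_rfl t ht
    · intro t ht
      have := hrineq t ht
      linarith
  -- downward induction
  have hHnn : ∀ k, k ≤ r → ∀ t ∈ Ici (0:ℝ), 0 ≤ hseq f h β (r - k) (ξ t, υ t) := by
    intro k
    induction k with
    | zero => intro _ t ht; simpa using hrnn t ht
    | succ k ih =>
      intro hk
      have prev := ih (by omega)
      have hik : r - (k+1) < r := by omega
      have hsucc : r - (k+1) + 1 = r - k := by omega
      apply nonneg_of_deriv_ge_neg_mul (c := β)
        (F' := fun t => hseq f h β (r - k) (ξ t, υ t)
          - β * hseq f h β (r - (k+1)) (ξ t, υ t)) _ _ (hi0 _ (by omega))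
      · intro t ht
        have H := hkey (r - (k+1)) hik t ht
        rw [hsucc] at H
        exact H
      · intro t ht
        have := prev t ht
        linarith
  have hInn : ∀ i ≤ r, ∀ t ∈ Ici (0:ℝ), 0 ≤ hseq f h β i (ξ t, υ t) := by
    intro i hi t ht
    have := hHnn (r - i) (by omega) t ht
    rwa [show r - (r - i) = i by omega] at this
  intro t ht
  simp only [Set.mem_iInter, Finset.mem_range, Xset, Set.mem_setOf_eq]
  intro i hi
  refine ⟨?_, hbnn t ht, hInn i (by omega) t ht⟩
  simpa [hseq] using hInn 0 (by omega) t ht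
end

section
/- Dissipation inequality from the KKT conditions of the controller QP (equation (16) in the proof of Theorem 1). Fix parameters ε, α, γ > 0. Let (x,u) ∈ ℝ^n × ℝ^m, q ∈ ℝ^m and λ_b ≥ 0, λ_h ≥ 0 satisfy: q + ε·((∂w/∂u)(u))^T ∇Φ(x) = λ_b·∇b(u) + λ_h·((∂h_r/∂u)(x,u))^T; λ_b·(⟨∇b(u), q⟩ + α·b(u)) = 0; λ_h·((∂h_r/∂u)(x,u)·q + (∂h_r/∂x)(x,u)·f(x,u) + γ·h_r(x,u)) = 0. If moreover b(u) ≥ 0 and (∂h_r/∂x)(x,u)·f(x,u) + γ·h_r(x,u) ≥ 0, then ⟨∇Φ(x), (∂w/∂u)(u)·q⟩ ≤ −(1/ε)·‖q‖². -/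
open Set Filter Topology
open scoped RealInnerProductSpace

/-- Dissipation inequality from the KKT conditions of the controller QP (equation (16) in the
proof of Theorem 1): if `(q, λ_b, λ_h)` satisfy the KKT stationarity and complementarity
conditions of the controller QP at `(x,u)`, `b(u) ≥ 0` and
`(∂h_r/∂x)(x,u)·f(x,u) + γ·h_r(x,u) ≥ 0`, then
`⟨∇Φ(x), (∂w/∂u)(u)·q⟩ ≤ −(1/ε)·‖q‖²`. -/
theorem dissipation_inequality
    {n m r : ℕ} (hn : 0 < n) (hm : 0 < m) (hr : 0 < r)
    (f : EuclideanSpace ℝ (Fin n) × EuclideanSpace ℝ (Fin m) → EuclideanSpace ℝ (Fin n))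
    (h : EuclideanSpace ℝ (Fin n) → ℝ) (b : EuclideanSpace ℝ (Fin m) → ℝ)
    (hf : ContDiff ℝ (r + 1 : ℕ) f) (hh : ContDiff ℝ (r + 2 : ℕ) h) (hb : ContDiff ℝ 2 b)
    (β : ℝ) (hβ : 0 < β)
    (Φ : EuclideanSpace ℝ (Fin n) → ℝ) (w : EuclideanSpace ℝ (Fin m) → EuclideanSpace ℝ (Fin n))
    (hΦ : ContDiff ℝ 2 Φ) (hw : ContDiff ℝ 2 w)
    (ε α γ : ℝ) (hε : 0 < ε) (hα : 0 < α) (hγ : 0 < γ)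
    (x : EuclideanSpace ℝ (Fin n)) (u : EuclideanSpace ℝ (Fin m))
    (q : EuclideanSpace ℝ (Fin m)) (lb lh : ℝ) (hlb : 0 ≤ lb) (hlh : 0 ≤ lh)
    (hstat : q + ε • (ContinuousLinearMap.adjoint (fderiv ℝ w u)) (gradient Φ x)
      = lb • gradient b u + lh • gradient (fun u' => hseq f h β r (x, u')) u)
    (hcsb : lb * (⟪gradient b u, q⟫ + α * b u) = 0)
    (hcsh : lh * (fderiv ℝ (fun u' => hseq f h β r (x, u')) u q
      + fderiv ℝ (fun x' => hseq f h β r (x', u)) x (f (x, u)) + γ * hseq f h β r (x, u)) = 0)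
    (hbu : 0 ≤ b u)
    (hhr : 0 ≤ fderiv ℝ (fun x' => hseq f h β r (x', u)) x (f (x, u)) + γ * hseq f h β r (x, u)) :
    ⟪gradient Φ x, fderiv ℝ w u q⟫ ≤ -(1 / ε) * ‖q‖ ^ 2 := by
  have hgrad : ∀ (g : EuclideanSpace ℝ (Fin m) → ℝ) (v : EuclideanSpace ℝ (Fin m)),
      ⟪gradient g v, q⟫ = fderiv ℝ g v q := fun g v => by
    rw [gradient]; exact InnerProductSpace.toDual_symm_apply
  have e := congrArg (fun v => (inner ℝ v q : ℝ)) hstat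
  simp only [inner_add_left, real_inner_smul_left,
    ContinuousLinearMap.adjoint_inner_left, real_inner_self_eq_norm_sq] at e
  rw [hgrad, hgrad] at e
  rw [hgrad] at hcsb
  have h1 : lb * fderiv ℝ b u q ≤ 0 := by nlinarith [mul_nonneg (mul_nonneg hlb hα.le) hbu]
  have h2 : lh * fderiv ℝ (fun u' => hseq f h β r (x, u')) u q ≤ 0 := by
    nlinarith [mul_nonneg hlh hhr]
  rw [show -(1/ε) * ‖q‖^2 = (-‖q‖^2)/ε by ring, le_div_iff₀ hε]
  nlinarith
end

section
/- Pointwise Lyapunov decrease estimate (combining equations (14)–(16) in the proof of Theorem 1). Fix parameters ε, α, γ > 0 and constants d₃, d₄ > 0, L ≥ 0. Let (x,u) ∈ ℝ^n × ℝ^m, q ∈ ℝ^m and λ_b ≥ 0, λ_h ≥ 0 satisfy: q + ε·((∂w/∂u)(u))^T ∇Φ(x) = λ_b·∇b(u) + λ_h·((∂h_r/∂u)(x,u))^T; λ_b·(⟨∇b(u), q⟩ + α·b(u)) = 0; λ_h·((∂h_r/∂u)(x,u)·q + (∂h_r/∂x)(x,u)·f(x,u) + γ·h_r(x,u)) = 0;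 b(u) ≥ 0; and (∂h_r/∂x)(x,u)·f(x,u) + γ·h_r(x,u) ≥ 0. Suppose also that ‖((∂w/∂u)(u))^T·(∇Φ(w(u)) − ∇Φ(x))‖ ≤ L·‖x − w(u)‖, and that W : ℝ^n × ℝ^m → ℝ is continuously differentiable with (∂W/∂x)(x,u)·f(x,u) ≤ −d₃·‖x − w(u)‖² and ‖(∂W/∂u)(x,u)‖ ≤ d₄·‖x − w(u)‖. Then ⟨∇Φ(w(u)), (∂w/∂u)(u)·q⟩ + (∂W/∂x)(x,u)·f(x,u) + (∂W/∂u)(x,u)·q ≤ −(1/ε)·‖q‖² + (L + d₄)·‖q‖·‖x − w(u)‖ − d₃·‖x − w(u)‖². Moreover, if ε < 4·d₃/(L + d₄)², then the right-hand side is ≤ 0, and it equals 0 only if q = 0 and x = w(u). -/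
open Set Filter Topology
open scoped RealInnerProductSpace

set_option maxHeartbeats 1000000

lemma quad_aux (ε d₃ C a s : ℝ) (hε : 0 < ε) (hd₃ : 0 < d₃) (ha : 0 ≤ a) (hs : 0 ≤ s)
    (hεC : ε * C ^ 2 < 4 * d₃) :
    -(1/ε) * a ^ 2 + C * a * s - d₃ * s ^ 2 ≤ 0 ∧
      (-(1/ε) * a ^ 2 + C * a * s - d₃ * s ^ 2 = 0 → a = 0 ∧ s = 0) := by
  have hεne : ε ≠ 0 := ne_of_gt hε
  have hrep : -(1/ε) * a ^ 2 + C * a * s - d₃ * s ^ 2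
      = (-(a ^ 2) + ε * C * a * s - ε * d₃ * s ^ 2) / ε := by
    field_simp
  have hN : -(a ^ 2) + ε * C * a * s - ε * d₃ * s ^ 2 ≤ 0 := by
    nlinarith [sq_nonneg (2 * a - ε * C * s), mul_nonneg hε.le (sq_nonneg s), sq_nonneg s]
  constructor
  · rw [hrep]; exact div_nonpos_of_nonpos_of_nonneg hN hε.le
  · intro h0
    rw [hrep, div_eq_zero_iff] at h0
    have hN0 : -(a ^ 2) + ε * C * a * s - ε * d₃ * s ^ 2 = 0 := h0.resolve_right hεne
    have hs0 : s = 0 := by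
      by_contra hsne
      have hspos : 0 < s := lt_of_le_of_ne hs (Ne.symm hsne)
      nlinarith [sq_nonneg (2 * a - ε * C * s), mul_pos hε (mul_pos hspos hspos)]
    have ha2 : a ^ 2 = 0 := by rw [hs0] at hN0; nlinarith
    exact ⟨pow_eq_zero_iff two_ne_zero |>.mp ha2, hs0⟩


/-- Pointwise Lyapunov decrease estimate (combining equations (14)–(16) in the proof of
Theorem 1). -/
theorem lyapunov_decrease_estimate
    {n m r : ℕ} (hn : 0 < n) (hm : 0 < m) (hr : 0 < r)
    (f : EuclideanSpace ℝ (Fin n) × EuclideanSpace ℝ (Fin m) → EuclideanSpace ℝ (Fin n))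
    (h : EuclideanSpace ℝ (Fin n) → ℝ) (b : EuclideanSpace ℝ (Fin m) → ℝ)
    (hf : ContDiff ℝ (r + 1 : ℕ) f) (hh : ContDiff ℝ (r + 2 : ℕ) h) (hb : ContDiff ℝ 2 b)
    (β : ℝ) (hβ : 0 < β)
    (Φ : EuclideanSpace ℝ (Fin n) → ℝ) (w : EuclideanSpace ℝ (Fin m) → EuclideanSpace ℝ (Fin n))
    (hΦ : ContDiff ℝ 2 Φ) (hw : ContDiff ℝ 2 w)
    (ε α γ : ℝ) (hε : 0 < ε) (hα : 0 < α) (hγ : 0 < γ)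
    (d₃ d₄ L : ℝ) (hd₃ : 0 < d₃) (hd₄ : 0 < d₄) (hL : 0 ≤ L)
    (x : EuclideanSpace ℝ (Fin n)) (u : EuclideanSpace ℝ (Fin m))
    (q : EuclideanSpace ℝ (Fin m)) (lb lh : ℝ) (hlb : 0 ≤ lb) (hlh : 0 ≤ lh)
    (hstat : q + ε • (ContinuousLinearMap.adjoint (fderiv ℝ w u)) (gradient Φ x)
      = lb • gradient b u + lh • gradient (fun u' => hseq f h β r (x, u')) u)
    (hcsb : lb * (⟪gradient b u, q⟫ + α * b u) = 0)
    (hcsh : lh * (fderiv ℝ (fun u' => hseq f h β r (x, u')) u q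
      + fderiv ℝ (fun x' => hseq f h β r (x', u)) x (f (x, u)) + γ * hseq f h β r (x, u)) = 0)
    (hbu : 0 ≤ b u)
    (hhr : 0 ≤ fderiv ℝ (fun x' => hseq f h β r (x', u)) x (f (x, u)) + γ * hseq f h β r (x, u))
    (hLip : ‖(ContinuousLinearMap.adjoint (fderiv ℝ w u)) (gradient Φ (w u) - gradient Φ x)‖
      ≤ L * ‖x - w u‖)
    (W : EuclideanSpace ℝ (Fin n) × EuclideanSpace ℝ (Fin m) → ℝ) (hW : ContDiff ℝ 1 W)
    (hWx : fderiv ℝ (fun x' => W (x', u)) x (f (x, u)) ≤ -d₃ * ‖x - w u‖ ^ 2)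
    (hWu : ‖fderiv ℝ (fun u' => W (x, u')) u‖ ≤ d₄ * ‖x - w u‖) :
    ⟪gradient Φ (w u), fderiv ℝ w u q⟫
      + fderiv ℝ (fun x' => W (x', u)) x (f (x, u))
      + fderiv ℝ (fun u' => W (x, u')) u q
      ≤ -(1 / ε) * ‖q‖ ^ 2 + (L + d₄) * ‖q‖ * ‖x - w u‖ - d₃ * ‖x - w u‖ ^ 2 ∧
    (ε < 4 * d₃ / (L + d₄) ^ 2 →
      -(1 / ε) * ‖q‖ ^ 2 + (L + d₄) * ‖q‖ * ‖x - w u‖ - d₃ * ‖x - w u‖ ^ 2 ≤ 0 ∧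
      (-(1 / ε) * ‖q‖ ^ 2 + (L + d₄) * ‖q‖ * ‖x - w u‖ - d₃ * ‖x - w u‖ ^ 2 = 0 →
        q = 0 ∧ x = w u)) := by
  classical
  set A := ContinuousLinearMap.adjoint (fderiv ℝ w u) with hA
  -- gradient/fderiv relation
  have hgradh : ∀ y : EuclideanSpace ℝ (Fin m),
      ⟪gradient (fun u' => hseq f h β r (x, u')) u, y⟫
        = fderiv ℝ (fun u' => hseq f h β r (x, u')) u y := by
    intro y; rw [gradient]; exact InnerProductSpace.toDual_symm_apply
  -- inner product of stationarity equation with q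
  have key : ‖q‖ ^ 2 + ε * ⟪A (gradient Φ x), q⟫
      = lb * ⟪gradient b u, q⟫
        + lh * ⟪gradient (fun u' => hseq f h β r (x, u')) u, q⟫ := by
    have hq := congrArg (fun v => (⟪v, q⟫ : ℝ)) hstat
    simp only [inner_add_left, real_inner_smul_left] at hq
    rw [← real_inner_self_eq_norm_sq]
    exact hq
  -- complementary slackness bounds
  have hb0 : lb * ⟪gradient b u, q⟫ ≤ 0 := by
    have h1 : lb * ⟪gradient b u, q⟫ = -(lb * (α * b u)) := by
      linear_combination hcsb
    rw [h1]
    have : 0 ≤ lb * (α * b u) := mul_nonneg hlb (mul_nonneg hα.le hbu)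
    linarith
  have hh0 : lh * ⟪gradient (fun u' => hseq f h β r (x, u')) u, q⟫ ≤ 0 := by
    rw [hgradh]
    have h1 : lh * fderiv ℝ (fun u' => hseq f h β r (x, u')) u q
        = -(lh * (fderiv ℝ (fun x' => hseq f h β r (x', u)) x (f (x, u))
            + γ * hseq f h β r (x, u))) := by linear_combination hcsh
    rw [h1]
    have : 0 ≤ lh * (fderiv ℝ (fun x' => hseq f h β r (x', u)) x (f (x, u))
        + γ * hseq f h β r (x, u)) := mul_nonneg hlh hhr
    linarith
  have I2 : ε * ⟪A (gradient Φ x), q⟫ ≤ -‖q‖ ^ 2 := by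
    linarith [key, hb0, hh0]
  have I2' : ⟪A (gradient Φ x), q⟫ ≤ -(1 / ε) * ‖q‖ ^ 2 := by
    rw [show -(1 / ε) * ‖q‖ ^ 2 = (-‖q‖ ^ 2) / ε by ring, le_div_iff₀ hε]
    linarith [I2, mul_comm ε (⟪A (gradient Φ x), q⟫ : ℝ)]
  -- Cauchy-Schwarz on the Lipschitz term
  have I1 : ⟪A (gradient Φ (w u) - gradient Φ x), q⟫ ≤ L * ‖x - w u‖ * ‖q‖ := by
    calc ⟪A (gradient Φ (w u) - gradient Φ x), q⟫
        ≤ ‖A (gradient Φ (w u) - gradient Φ x)‖ * ‖q‖ := real_inner_le_norm _ _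
      _ ≤ (L * ‖x - w u‖) * ‖q‖ := mul_le_mul_of_nonneg_right hLip (norm_nonneg q)
  -- bound on the W_u term
  have I3 : fderiv ℝ (fun u' => W (x, u')) u q ≤ d₄ * ‖x - w u‖ * ‖q‖ := by
    calc fderiv ℝ (fun u' => W (x, u')) u q
        ≤ ‖fderiv ℝ (fun u' => W (x, u')) u q‖ := Real.le_norm_self _
      _ ≤ ‖fderiv ℝ (fun u' => W (x, u')) u‖ * ‖q‖ :=
          (fderiv ℝ (fun u' => W (x, u')) u).le_opNorm q
      _ ≤ (d₄ * ‖x - w u‖) * ‖q‖ := mul_le_mul_of_nonneg_right hWu (norm_nonneg q)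
  -- rewrite the Φ term through the adjoint
  have hadj : ⟪gradient Φ (w u), fderiv ℝ w u q⟫
      = ⟪A (gradient Φ (w u) - gradient Φ x), q⟫ + ⟪A (gradient Φ x), q⟫ := by
    rw [map_sub, inner_sub_left, hA, ContinuousLinearMap.adjoint_inner_left]
    ring
  constructor
  · rw [hadj]
    linarith [I1, I2', I3, hWx]
  · intro hεlt
    have hCpos : 0 < L + d₄ := by linarith
    have hεC : ε * (L + d₄) ^ 2 < 4 * d₃ := by
      rw [lt_div_iff₀ (by positivity)] at hεlt; linarith [hεlt]
    have := quad_aux ε d₃ (L + d₄) ‖q‖ ‖x - w u‖ hε hd₃ (norm_nonneg q) (norm_nonneg _) hεC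
    refine ⟨this.1, fun h0 => ?_⟩
    obtain ⟨hq0, hx0⟩ := this.2 h0
    exact ⟨norm_eq_zero.mp hq0, sub_eq_zero.mp (norm_eq_zero.mp hx0)⟩
end
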